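/- Let $q$ be a prime power, $\varepsilon \in \{1,-1\}$, let $d_1, d_2$ be divisors of $q - \varepsilon$ with $l = \gcd(d_1,d_2)$, let $\alpha$ be a primitive element of $\mathbb{F}_{q^2}$, and let $a_1, a_2 \in \mathbb{F}_{q^2}^*$. Then $\sum_{j=1}^{q-\varepsilon} (1-d_1)^{\theta_{d_1}(a_1,\alpha^j)} (1-d_2)^{\theta_{d_2}(a_2,\alpha^j)} = -(q-\varepsilon)(1-l)^{\theta_l(a_1,a_2)}$. -/

import Mathlib

open Finset

/-- `theta N d a b` is `1` if `a ^ (N / d) = b ^ (N / d)` and `0` otherwise. -/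
def theta {F : Type*} [Monoid F] [DecidableEq F] (N d : ℕ) (a b : F) : ℕ :=
  if a ^ (N / d) = b ^ (N / d) then 1 else 0

lemma countA (m d : ℕ) (hd : 0 < d) (hdm : d ∣ m) (s : ℤ) :
    #((Finset.Icc 1 m).filter (fun j : ℕ => (d:ℤ) ∣ (j:ℤ) - s)) = m / d := by
  obtain ⟨k, rfl⟩ := hdm
  have hmap : ((Finset.Icc 1 (d*k)).filter (fun j : ℕ => (d:ℤ) ∣ (j:ℤ) - s)).map Nat.castEmbedding
      = {x ∈ Finset.Ioc (0:ℤ) ((d*k:ℕ):ℤ) | x ≡ s [ZMOD (d:ℤ)]} := by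
    ext x
    simp only [Finset.mem_map, Finset.mem_filter, Finset.mem_Icc, Finset.mem_Ioc,
      Nat.castEmbedding_apply]
    constructor
    · rintro ⟨y, ⟨⟨hy1, hy2⟩, hdvd⟩, rfl⟩
      refine ⟨⟨by exact_mod_cast hy1, by exact_mod_cast hy2⟩, ?_⟩
      exact Int.modEq_iff_dvd.mpr ((dvd_sub_comm).mpr hdvd)
    · rintro ⟨⟨hx1, hx2⟩, hmod⟩
      lift x to ℕ using (by linarith)
      refine ⟨x, ⟨⟨by exact_mod_cast hx1, by exact_mod_cast hx2⟩, ?_⟩, rfl⟩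
      exact (dvd_sub_comm).mpr (Int.modEq_iff_dvd.mp hmod)
  have hcard := Int.Ioc_filter_modEq_card (0:ℤ) ((d*k:ℕ):ℤ) (r := (d:ℤ)) (by exact_mod_cast hd) s
  rw [← hmap, Finset.card_map] at hcard
  have hfloor : (⌊(((d*k:ℕ):ℤ) - s) / ((d:ℤ) : ℚ)⌋ - ⌊(((0:ℤ)) - s) / ((d:ℤ) : ℚ)⌋ : ℤ) = k := by
    push_cast
    rw [show ((d:ℚ) * k - s) / d = ((k:ℤ):ℚ) + (-s) / d by field_simp; push_cast; ring]
    rw [Int.floor_intCast_add]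
    rw [show ((0:ℚ) - (s:ℚ)) / d = -s/d by ring]
    push_cast
    ring
  rw [hfloor] at hcard
  have h2 : (#((Finset.Icc 1 (d*k)).filter (fun j : ℕ => (d:ℤ) ∣ (j:ℤ) - s)) : ℤ) = ((k:ℕ):ℤ) := by
    rw [hcard]; exact max_eq_left (by positivity)
  have h3 := Nat.cast_injective h2
  rw [h3, Nat.mul_div_cancel_left _ hd]

lemma countB (m d1 d2 : ℕ) (hd1 : 0 < d1) (hd2 : 0 < d2) (h1 : d1 ∣ m) (h2 : d2 ∣ m)
    (s1 s2 : ℤ) (h : (Nat.gcd d1 d2 : ℤ) ∣ s1 - s2) :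
    #((Finset.Icc 1 m).filter (fun j : ℕ => (d1:ℤ) ∣ (j:ℤ) - s1 ∧ (d2:ℤ) ∣ (j:ℤ) - s2))
      = m / Nat.lcm d1 d2 := by
  obtain ⟨c, hc⟩ := h
  have hbez : ((Nat.gcd d1 d2 : ℕ) : ℤ) = d1 * Int.gcdA d1 d2 + d2 * Int.gcdB d1 d2 := by
    have := Int.gcd_eq_gcd_ab (d1:ℤ) (d2:ℤ)
    simpa [Int.gcd] using this
  set j0 : ℤ := s1 - d1 * Int.gcdA d1 d2 * c with hj0
  have hj01 : (d1:ℤ) ∣ j0 - s1 := ⟨-(Int.gcdA d1 d2 * c), by rw [hj0]; ring⟩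
  have hj02 : (d2:ℤ) ∣ j0 - s2 := ⟨Int.gcdB d1 d2 * c, by rw [hj0]; linear_combination hc + c * hbez⟩
  have hfil : ∀ j : ℕ, ((d1:ℤ) ∣ (j:ℤ) - s1 ∧ (d2:ℤ) ∣ (j:ℤ) - s2) ↔
      ((Nat.lcm d1 d2 : ℤ) ∣ (j:ℤ) - j0) := by
    intro j
    have hlcm : ∀ x : ℤ, ((Nat.lcm d1 d2 : ℤ) ∣ x) ↔ ((d1:ℤ) ∣ x ∧ (d2:ℤ) ∣ x) := by
      intro x
      constructor
      · intro hx
        exact ⟨(Int.natCast_dvd_natCast.mpr (Nat.dvd_lcm_left d1 d2)).trans hx,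
               (Int.natCast_dvd_natCast.mpr (Nat.dvd_lcm_right d1 d2)).trans hx⟩
      · rintro ⟨hx1, hx2⟩
        exact Int.natCast_dvd.mpr (Nat.lcm_dvd (Int.natCast_dvd.mp hx1) (Int.natCast_dvd.mp hx2))
    rw [hlcm]
    constructor
    · rintro ⟨hA, hB⟩
      have h' := dvd_sub hA hj01
      rw [show ((j:ℤ) - s1) - (j0 - s1) = (j:ℤ) - j0 by ring] at h'
      have h'' := dvd_sub hB hj02
      rw [show ((j:ℤ) - s2) - (j0 - s2) = (j:ℤ) - j0 by ring] at h''
      exact ⟨h', h''⟩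
    · rintro ⟨hA, hB⟩
      refine ⟨?_, ?_⟩
      · have h' := dvd_add hA hj01
        rwa [show ((j:ℤ) - j0) + (j0 - s1) = (j:ℤ) - s1 by ring] at h'
      · have h' := dvd_add hB hj02
        rwa [show ((j:ℤ) - j0) + (j0 - s2) = (j:ℤ) - s2 by ring] at h'
  rw [Finset.filter_congr (fun j _ => hfil j)]
  exact countA m _ (Nat.pos_of_ne_zero (Nat.lcm_ne_zero hd1.ne' hd2.ne')) (Nat.lcm_dvd h1 h2) j0


lemma countC (m d1 d2 : ℕ)
    (s1 s2 : ℤ) (h : ¬ (Nat.gcd d1 d2 : ℤ) ∣ s1 - s2) :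
    #((Finset.Icc 1 m).filter (fun j : ℕ => (d1:ℤ) ∣ (j:ℤ) - s1 ∧ (d2:ℤ) ∣ (j:ℤ) - s2)) = 0 := by
  rw [Finset.card_eq_zero, Finset.filter_eq_empty_iff]
  rintro j - ⟨hj1, hj2⟩
  exact h (by
    have g1 : ((Nat.gcd d1 d2 : ℕ):ℤ) ∣ (j:ℤ) - s1 :=
      dvd_trans (Int.natCast_dvd_natCast.mpr (Nat.gcd_dvd_left d1 d2)) hj1
    have g2 : ((Nat.gcd d1 d2 : ℕ):ℤ) ∣ (j:ℤ) - s2 :=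
      dvd_trans (Int.natCast_dvd_natCast.mpr (Nat.gcd_dvd_right d1 d2)) hj2
    have := dvd_sub g2 g1
    simpa using this)

lemma ordAlpha (q : ℕ) (hq2 : 2 ≤ q)
    (F : Type*) [Field F] [Fintype F] [DecidableEq F] (hF : Fintype.card F = q ^ 2)
    (α : F) (hα : ∀ x : F, x ≠ 0 → ∃ k : ℕ, α ^ k = x) :
    α ≠ 0 ∧ orderOf α = q ^ 2 - 1 := by
  have hq4 : 4 ≤ q ^ 2 := by nlinarith
  have hN : 3 ≤ q ^ 2 - 1 := by omega
  -- exists x ≠ 0, x ≠ 1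
  have hx : ∃ x : F, x ≠ 0 ∧ x ≠ 1 := by
    have hcard2 : ({0, 1} : Finset F).card ≤ 2 :=
      (Finset.card_insert_le _ _).trans (by simp)
    have hne : (Finset.univ \ ({0, 1} : Finset F)).Nonempty := by
      rw [← Finset.card_pos]
      have h1 := Finset.le_card_sdiff ({0,1} : Finset F) Finset.univ
      have h2 : (Finset.univ : Finset F).card = q ^ 2 := by rw [Finset.card_univ, hF]
      omega
    obtain ⟨x, hx⟩ := hne
    simp only [Finset.mem_sdiff, Finset.mem_insert, Finset.mem_singleton] at hx
    exact ⟨x, fun h => hx.2 (Or.inl h), fun h => hx.2 (Or.inr h)⟩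
  obtain ⟨x, hx0, hx1⟩ := hx
  have hα0 : α ≠ 0 := by
    rintro rfl
    obtain ⟨k, hk⟩ := hα x hx0
    rcases Nat.eq_zero_or_pos k with rfl | hk'
    · simp at hk; exact hx1 hk.symm
    · rw [zero_pow hk'.ne'] at hk; exact hx0 hk.symm
  have hpow : α ^ (q ^ 2 - 1) = 1 := by
    have := FiniteField.pow_card_sub_one_eq_one α hα0
    rwa [hF] at this
  have hfin : IsOfFinOrder α := isOfFinOrder_iff_pow_eq_one.mpr ⟨q^2-1, by omega, hpow⟩
  have hordpos : 0 < orderOf α := hfin.orderOf_pos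
  have hdvd : orderOf α ∣ q ^ 2 - 1 := orderOf_dvd_of_pow_eq_one hpow
  have hge : q ^ 2 - 1 ≤ orderOf α := by
    have hsub : (Finset.univ.erase (0:F)) ⊆ (Finset.range (orderOf α)).image (fun k => α ^ k) := by
      intro y hy
      have hy0 : y ≠ 0 := by simpa using (Finset.mem_erase.mp hy).1
      obtain ⟨k, hk⟩ := hα y hy0
      refine Finset.mem_image.mpr ⟨k % orderOf α, Finset.mem_range.mpr (Nat.mod_lt _ hordpos), ?_⟩
      rw [pow_mod_orderOf, hk]
    calc q ^ 2 - 1 = (Finset.univ.erase (0:F)).card := by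
          rw [Finset.card_erase_of_mem (Finset.mem_univ _), Finset.card_univ, hF]
      _ ≤ ((Finset.range (orderOf α)).image (fun k => α ^ k)).card := Finset.card_le_card hsub
      _ ≤ (Finset.range (orderOf α)).card := Finset.card_image_le
      _ = orderOf α := Finset.card_range _
  exact ⟨hα0, le_antisymm (Nat.le_of_dvd (by omega) hdvd) hge⟩

lemma thetaEq {F : Type*} [Field F] (N d : ℕ) (hN : 0 < N) (hd : 0 < d) (hdN : d ∣ N)
    (α : F) (hα0 : α ≠ 0) (hord : orderOf α = N) (a b : ℕ) :
    (α ^ a) ^ (N / d) = (α ^ b) ^ (N / d) ↔ (d : ℤ) ∣ (a : ℤ) - (b : ℤ) := by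
  set u : Fˣ := Units.mk0 α hα0 with hu
  have hordu : orderOf u = N := by rw [← hord, ← orderOf_units]; rfl
  have hval : ∀ n : ℕ, (u ^ n : Fˣ) = (α ^ n : F) := fun n => by rw [hu]; simp
  have key : (α ^ a) ^ (N / d) = (α ^ b) ^ (N / d) ↔
      (u ^ (a * (N / d)) : Fˣ) = u ^ (b * (N / d)) := by
    rw [← pow_mul, ← pow_mul, Units.ext_iff, hval, hval]
  rw [key, pow_eq_pow_iff_modEq, hordu]
  obtain ⟨e, rfl⟩ := hdN
  have he : 0 < e := Nat.pos_of_ne_zero (by rintro rfl; simp at hN)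
  rw [Nat.mul_div_cancel_left _ hd, Nat.modEq_iff_dvd]
  push_cast
  rw [show ((b:ℤ) * e - a * e) = ((b:ℤ) - a) * e by ring,
    mul_dvd_mul_iff_right (by exact_mod_cast he.ne' : ((e:ℕ):ℤ) ≠ 0)]
  exact dvd_sub_comm

lemma powIte (x : ℤ) (P : Prop) [Decidable P] :
    x ^ (if P then 1 else 0) = 1 - (1 - x) * (if P then 1 else 0) := by
  split_ifs <;> ring

theorem stmt18 (q : ℕ) (hq : ∃ p t : ℕ, p.Prime ∧ 0 < t ∧ q = p ^ t)
    (ε : ℤ) (hε : ε = 1 ∨ ε = -1)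
    (d1 d2 : ℕ) (hd1 : 0 < d1) (hd2 : 0 < d2)
    (h1 : (d1 : ℤ) ∣ (q : ℤ) - ε) (h2 : (d2 : ℤ) ∣ (q : ℤ) - ε)
    (l : ℕ) (hl : l = Nat.gcd d1 d2)
    (F : Type*) [Field F] [Fintype F] [DecidableEq F] (hF : Fintype.card F = q ^ 2)
    (α : F) (hα : ∀ x : F, x ≠ 0 → ∃ k : ℕ, α ^ k = x)
    (a1 a2 : F) (ha1 : a1 ≠ 0) (ha2 : a2 ≠ 0) :
    ∑ j ∈ Finset.Icc 1 ((q : ℤ) - ε).toNat,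
        (1 - (d1 : ℤ)) ^ theta (q ^ 2 - 1) d1 a1 (α ^ j) *
          (1 - (d2 : ℤ)) ^ theta (q ^ 2 - 1) d2 a2 (α ^ j) =
      -((q : ℤ) - ε) * (1 - (l : ℤ)) ^ theta (q ^ 2 - 1) l a1 a2 := by
  have hq2 : 2 ≤ q := by
    obtain ⟨p, t, hp, ht, rfl⟩ := hq
    calc 2 ≤ p := hp.two_le
    _ = p ^ 1 := (pow_one p).symm
    _ ≤ p ^ t := Nat.pow_le_pow_right hp.pos ht
  have hq2' : (2:ℤ) ≤ (q:ℤ) := by exact_mod_cast hq2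
  set N := q ^ 2 - 1 with hNdef
  set m := ((q:ℤ) - ε).toNat with hmdef
  have hmz : ((m:ℕ):ℤ) = (q:ℤ) - ε := Int.toNat_of_nonneg (by rcases hε with rfl | rfl <;> omega)
  have hNz : ((N:ℕ):ℤ) = (q:ℤ)^2 - 1 := by
    have : 1 ≤ q ^ 2 := Nat.one_le_pow _ _ (by omega)
    rw [hNdef]; push_cast [this]; ring
  have hNpos : 0 < N := by
    have : 4 ≤ q ^ 2 := by nlinarith
    omega
  have hmN : m ∣ N := by
    rw [← Int.natCast_dvd_natCast, hmz, hNz]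
    exact ⟨(q:ℤ) + ε, by rcases hε with rfl | rfl <;> ring⟩
  have hd1m : d1 ∣ m := by rw [← Int.natCast_dvd_natCast, hmz]; exact h1
  have hd2m : d2 ∣ m := by rw [← Int.natCast_dvd_natCast, hmz]; exact h2
  have hlpos : 0 < l := by rw [hl]; exact Nat.gcd_pos_of_pos_left _ hd1
  have hd1N : d1 ∣ N := hd1m.trans hmN
  have hd2N : d2 ∣ N := hd2m.trans hmN
  have hlN : l ∣ N := (hl ▸ Nat.gcd_dvd_left d1 d2).trans hd1N
  obtain ⟨hα0, hord⟩ := ordAlpha q hq2 F hF α hα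
  obtain ⟨s1, hs1⟩ := hα a1 ha1
  obtain ⟨s2, hs2⟩ := hα a2 ha2
  subst hs1 hs2
  -- rewrite thetas
  have ht1 : ∀ j : ℕ, theta N d1 (α ^ s1) (α ^ j) = if (d1:ℤ) ∣ (j:ℤ) - s1 then 1 else 0 := by
    intro j
    rw [theta]
    exact if_congr ((thetaEq N d1 hNpos hd1 hd1N α hα0 hord s1 j).trans dvd_sub_comm) rfl rfl
  have ht2 : ∀ j : ℕ, theta N d2 (α ^ s2) (α ^ j) = if (d2:ℤ) ∣ (j:ℤ) - s2 then 1 else 0 := by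
    intro j
    rw [theta]
    exact if_congr ((thetaEq N d2 hNpos hd2 hd2N α hα0 hord s2 j).trans dvd_sub_comm) rfl rfl
  have ht3 : theta N l (α ^ s1) (α ^ s2) = if (l:ℤ) ∣ (s1:ℤ) - s2 then 1 else 0 := by
    rw [theta]
    exact if_congr (thetaEq N l hNpos hlpos hlN α hα0 hord s1 s2) rfl rfl
  have hsum : ∑ j ∈ Finset.Icc 1 m,
      (1 - (d1 : ℤ)) ^ theta N d1 (α ^ s1) (α ^ j) *
        (1 - (d2 : ℤ)) ^ theta N d2 (α ^ s2) (α ^ j)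
      = ∑ j ∈ Finset.Icc 1 m,
        ((1 : ℤ) - d1 * (if (d1:ℤ) ∣ (j:ℤ) - s1 then 1 else 0)
          - d2 * (if (d2:ℤ) ∣ (j:ℤ) - s2 then 1 else 0)
          + d1 * d2 * (if ((d1:ℤ) ∣ (j:ℤ) - s1 ∧ (d2:ℤ) ∣ (j:ℤ) - s2) then 1 else 0)) := by
    refine Finset.sum_congr rfl fun j _ => ?_
    rw [ht1 j, ht2 j, powIte, powIte]
    have h11 : (1:ℤ) - (1 - (1 - (d1:ℤ))) = 1 - d1 := by ring
    by_cases hA : (d1:ℤ) ∣ (j:ℤ) - s1 <;> by_cases hB : (d2:ℤ) ∣ (j:ℤ) - s2 <;>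
      simp [hA, hB] <;> ring
  rw [hsum]
  rw [Finset.sum_add_distrib, Finset.sum_sub_distrib, Finset.sum_sub_distrib,
    ← Finset.mul_sum, ← Finset.mul_sum, ← Finset.mul_sum,
    Finset.sum_boole, Finset.sum_boole, Finset.sum_boole, Finset.sum_const,
    Nat.card_Icc]
  rw [countA m d1 hd1 hd1m s1, countA m d2 hd2 hd2m s2]
  have hmd1 : (d1:ℤ) * ((m / d1 : ℕ) : ℤ) = (m:ℤ) := by
    rw [← Nat.cast_mul, Nat.mul_div_cancel' hd1m]
  have hmd2 : (d2:ℤ) * ((m / d2 : ℕ) : ℤ) = (m:ℤ) := by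
    rw [← Nat.cast_mul, Nat.mul_div_cancel' hd2m]
  rw [← hmz] at *
  by_cases hgcd : (l:ℤ) ∣ (s1:ℤ) - s2
  · rw [countB m d1 d2 hd1 hd2 hd1m hd2m s1 s2 (hl ▸ hgcd)]
    have hlcm : (d1:ℤ) * d2 * ((m / Nat.lcm d1 d2 : ℕ) : ℤ) = (l:ℤ) * m := by
      have hLm : Nat.lcm d1 d2 ∣ m := Nat.lcm_dvd hd1m hd2m
      have : d1 * d2 * (m / Nat.lcm d1 d2) = l * m := by
        rw [hl, ← Nat.gcd_mul_lcm d1 d2, Nat.mul_assoc, Nat.mul_div_cancel' hLm]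
      exact_mod_cast congrArg (Nat.cast : ℕ → ℤ) this
    rw [hlcm, hmd1, hmd2, ht3, if_pos hgcd, pow_one, show m + 1 - 1 = m from rfl]
    simp only [nsmul_eq_mul, mul_one]
    ring
  · rw [countC m d1 d2 s1 s2 (hl ▸ hgcd)]
    rw [hmd1, hmd2, ht3, if_neg hgcd, pow_zero, show m + 1 - 1 = m from rfl]
    simp only [nsmul_eq_mul, mul_one, Nat.cast_zero]
    ring
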